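/- Fix ℓ ∈ ℕ. Let Q ∈ Δ_m have full support (Q_i > 0 for all i), let Π be nonempty with Q ∉ Π, and assume the regularity condition on Π. Let X_1, X_2, … be i.i.d. random variables with distribution Q on the alphabet {1,…,m}, and let T_{n−ℓ} ∈ 𝒫_{n−ℓ} denote the empirical distribution (type) of (X_1,…,X_{n−ℓ}). Then lim_{n→∞} (1/(n−ℓ)) ln P(T_{n−ℓ} ∈ Π_{n,ℓ}) = −D_KL(Π ‖ Q). -/

import Mathlib

open Filter

noncomputable section

/-- The set of types of length-`n` sequences over an alphabet of size `m`:
probability vectors all of whose coordinates are integer multiples of `1/n`. -/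
def typesP (m n : ℕ) : Set (Fin m → ℝ) :=
  {p | p ∈ stdSimplex ℝ (Fin m) ∧ ∀ i, ∃ k : ℕ, p i = (k : ℝ) / (n : ℝ)}

/-- KL divergence `D_KL(P‖Q) = Σ_i P_i ln(P_i/Q_i)`. -/
def klDiv {m : ℕ} (P Q : Fin m → ℝ) : ℝ :=
  ∑ i, P i * Real.log (P i / Q i)

/-- KL divergence of a set of distributions from `Q` (as an extended real,
so that the infimum over the empty set is `+∞`). -/
def klDivSet {m : ℕ} (S : Set (Fin m → ℝ)) (Q : Fin m → ℝ) : EReal :=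
  ⨅ P : S, ((klDiv P.1 Q : ℝ) : EReal)

/-- The set `Π` determined by the `K × m` matrix `A` over the alphabet of size
`m + 1`: probability vectors whose first `m` coordinates satisfy at least one of
the `K` linear constraints `(A p)_i ≥ 0`. -/
def PiSet {K m : ℕ} (A : Matrix (Fin K) (Fin m) ℝ) : Set (Fin (m + 1) → ℝ) :=
  {p | p ∈ stdSimplex ℝ (Fin (m + 1)) ∧ ∃ i : Fin K, 0 ≤ ∑ j, A i j * p j.castSucc}

/-- The shifted set `Π_{n,ℓ}`: at least one constraint `(A p)_i ≥ ℓ/(n−ℓ)`. -/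
def PiSetShift {K m : ℕ} (A : Matrix (Fin K) (Fin m) ℝ) (n ℓ : ℕ) :
    Set (Fin (m + 1) → ℝ) :=
  {p | p ∈ stdSimplex ℝ (Fin (m + 1)) ∧
    ∃ i : Fin K, (ℓ : ℝ) / ((n : ℝ) - (ℓ : ℝ)) ≤ ∑ j, A i j * p j.castSucc}

/-- The regularity condition: every point of `Π` is a limit of points of the
simplex satisfying some constraint strictly. -/
def RegularPi {K m : ℕ} (A : Matrix (Fin K) (Fin m) ℝ) : Prop :=
  ∀ p ∈ PiSet A, p ∈ closure {q : Fin (m + 1) → ℝ |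
    q ∈ stdSimplex ℝ (Fin (m + 1)) ∧ ∃ i : Fin K, 0 < ∑ j, A i j * q j.castSucc}

open ProbabilityTheory

/-- The empirical distribution (type) of the first `n` samples. -/
def empiricalType {m : ℕ} {Ω : Type*} (Z : ℕ → Ω → Fin m) (n : ℕ) (ω : Ω) :
    Fin m → ℝ :=
  fun a => ((Finset.univ.filter fun j : Fin n => Z j ω = a).card : ℝ) / (n : ℝ)


namespace SanovAux

open Nat Finset

/-! ### Counting sequences by type -/

variable {α : Type*} [Fintype α] [DecidableEq α]

def cntv {n : ℕ} (x : Fin n → α) : α → ℕ := fun a => (univ.filter fun j => x j = a).card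

def typeVec (n : ℕ) (c : α → ℕ) : α → ℝ := fun a => (c a : ℝ) / n

lemma sum_cntv {n : ℕ} (x : Fin n → α) : ∑ a, cntv x a = n := by
  simpa [cntv] using
    (Finset.card_eq_sum_card_fiberwise (f := x) (s := univ) (t := univ) (by simp)).symm

lemma cntv_mem_piAntidiag {n : ℕ} (x : Fin n → α) :
    cntv x ∈ piAntidiag (univ : Finset α) n := by
  rw [mem_piAntidiag]; exact ⟨sum_cntv x, fun i _ => mem_univ i⟩

lemma prod_comp_eq_prod_pow {n : ℕ} {R : Type*} [CommMonoid R] (x : Fin n → α) (r : α → R) :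
    ∏ j, r (x j) = ∏ a, r a ^ cntv x a := by
  rw [← Finset.prod_fiberwise_of_maps_to (g := x) (t := univ) (fun j _ => mem_univ (x j))
    (fun j => r (x j))]
  refine Finset.prod_congr rfl fun a _ => ?_
  rw [Finset.prod_congr rfl (fun j hj => ?_), Finset.prod_const]
  · rfl
  · rw [(Finset.mem_filter.1 hj).2]

lemma prod_pow_eq_monomial' (c : α → ℕ) :
    (∏ a, (MvPolynomial.X a : MvPolynomial α ℕ) ^ c a)
      = MvPolynomial.monomial (Finsupp.equivFunOnFinite.symm c) 1 := by
  classical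
  set d : α →₀ ℕ := Finsupp.equivFunOnFinite.symm c with hd
  have h1 : ∏ a ∈ d.support, (MvPolynomial.X a : MvPolynomial α ℕ) ^ d a
      = ∏ a ∈ univ, (MvPolynomial.X a : MvPolynomial α ℕ) ^ d a :=
    Finset.prod_subset (Finset.subset_univ _) (fun a _ ha => by
      rw [Finsupp.notMem_support_iff.1 ha, pow_zero])
  have h2 : ∀ a : α, d a = c a := fun a => rfl
  rw [← MvPolynomial.prod_X_pow_eq_monomial, h1]
  exact Finset.prod_congr rfl fun a _ => by rw [h2]

lemma card_cntv_eq_multinomial {n : ℕ} (c : α → ℕ) (hc : ∑ a, c a = n) :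
    (univ.filter fun x : Fin n → α => cntv x = c).card = Nat.multinomial univ c := by
  classical
  have key : ((∑ a, MvPolynomial.X a : MvPolynomial α ℕ)) ^ n
      = ∑ x : Fin n → α, MvPolynomial.monomial (Finsupp.equivFunOnFinite.symm (cntv x)) 1 := by
    have h0 : ((∑ a, MvPolynomial.X a : MvPolynomial α ℕ)) ^ n
        = ∏ _j : Fin n, (∑ a, MvPolynomial.X a : MvPolynomial α ℕ) := by
      rw [Finset.prod_const, Finset.card_univ, Fintype.card_fin]
    rw [h0, Finset.prod_univ_sum, Fintype.piFinset_univ]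
    exact Finset.sum_congr rfl fun x _ => by
      rw [prod_comp_eq_prod_pow x, prod_pow_eq_monomial']
  have hC : ∀ M : ℕ, ((M : ℕ) : MvPolynomial α ℕ) = MvPolynomial.C M := by
    intro M; rw [← MvPolynomial.C_eq_coe_nat, Nat.cast_id]
  have key2 : ((∑ a, MvPolynomial.X a : MvPolynomial α ℕ)) ^ n
      = ∑ k ∈ piAntidiag (univ : Finset α) n,
          (MvPolynomial.C (Nat.multinomial univ k) : MvPolynomial α ℕ) *
            MvPolynomial.monomial (Finsupp.equivFunOnFinite.symm k) 1 := by
    rw [Finset.sum_pow_eq_sum_piAntidiag]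
    exact Finset.sum_congr rfl fun k _ => by
      rw [prod_pow_eq_monomial', hC]
  set d := Finsupp.equivFunOnFinite.symm c with hdd
  have e1 : MvPolynomial.coeff d ((∑ a, MvPolynomial.X a : MvPolynomial α ℕ) ^ n)
      = (univ.filter fun x : Fin n → α => cntv x = c).card := by
    rw [key, MvPolynomial.coeff_sum]
    simp only [MvPolynomial.coeff_monomial]
    rw [Finset.card_filter]
    refine Finset.sum_congr rfl fun x _ => ?_
    refine if_congr ?_ rfl rfl
    constructor
    · intro h; exact Finsupp.equivFunOnFinite.symm.injective h
    · intro h; rw [h]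
  have e2 : MvPolynomial.coeff d ((∑ a, MvPolynomial.X a : MvPolynomial α ℕ) ^ n)
      = Nat.multinomial univ c := by
    rw [key2, MvPolynomial.coeff_sum]
    have h3 : ∀ k ∈ piAntidiag (univ : Finset α) n,
        MvPolynomial.coeff d ((MvPolynomial.C (Nat.multinomial univ k) : MvPolynomial α ℕ) *
          MvPolynomial.monomial (Finsupp.equivFunOnFinite.symm k) 1)
        = if k = c then Nat.multinomial univ c else 0 := by
      intro k _
      rw [MvPolynomial.coeff_C_mul, MvPolynomial.coeff_monomial]
      by_cases h : k = c
      · simp [h, hdd]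
      · rw [if_neg h, if_neg, mul_zero]
        intro hk
        exact h (Finsupp.equivFunOnFinite.symm.injective hk)
    rw [Finset.sum_congr rfl h3, Finset.sum_ite_eq' (piAntidiag (univ : Finset α) n) c
      (fun _ => Nat.multinomial univ c), if_pos]
    rw [mem_piAntidiag]
    exact ⟨hc, fun i _ => mem_univ i⟩
  rw [← e1, e2]

lemma sum_filter_type {n : ℕ} (r : α → ℝ) (pc : (α → ℕ) → Prop) [DecidablePred pc] :
    ∑ x ∈ univ.filter (fun x : Fin n → α => pc (cntv x)), ∏ j, r (x j)
      = ∑ c ∈ (piAntidiag (univ : Finset α) n).filter pc,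
          (Nat.multinomial univ c : ℝ) * ∏ a, r a ^ c a := by
  classical
  have hmap : ∀ x ∈ univ.filter (fun x : Fin n → α => pc (cntv x)),
      cntv x ∈ (piAntidiag (univ : Finset α) n).filter pc := by
    intro x hx
    rw [Finset.mem_filter] at hx ⊢
    exact ⟨cntv_mem_piAntidiag x, hx.2⟩
  rw [← Finset.sum_fiberwise_of_maps_to hmap (fun x => ∏ j, r (x j))]
  refine Finset.sum_congr rfl fun c hc => ?_
  rw [Finset.mem_filter, mem_piAntidiag] at hc
  obtain ⟨⟨hcsum, -⟩, hpc⟩ := hc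
  have hset : (univ.filter (fun x : Fin n → α => pc (cntv x))).filter
      (fun x => cntv x = c) = univ.filter (fun x : Fin n → α => cntv x = c) := by
    ext x
    simp only [Finset.mem_filter, Finset.mem_univ, true_and]
    constructor
    · rintro ⟨-, h⟩; exact h
    · intro h; exact ⟨by rw [h]; exact hpc, h⟩
  rw [hset]
  have hval : ∀ x ∈ univ.filter (fun x : Fin n → α => cntv x = c),
      ∏ j, r (x j) = ∏ a, r a ^ c a := by
    intro x hx
    rw [Finset.mem_filter] at hx
    rw [prod_comp_eq_prod_pow x r, hx.2]
  rw [Finset.sum_congr rfl hval, Finset.sum_const, card_cntv_eq_multinomial c hcsum,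
    nsmul_eq_mul]

/-! ### Bounds on type class probabilities -/

lemma fact_le_fact_mul_pow (d k : ℕ) : (d + k)! ≤ Nat.factorial d * (d + k) ^ k := by
  induction k with
  | zero => simp
  | succ k ih =>
      have h1 : (d + (k+1))! = (d + k + 1) * (d + k)! := by
        rw [← Nat.add_assoc, Nat.factorial_succ]
      rw [h1]
      calc (d + k + 1) * (d + k)! ≤ (d + k + 1) * (Nat.factorial d * (d + k) ^ k) :=
            Nat.mul_le_mul_left _ ih
        _ ≤ (d + (k+1)) * (Nat.factorial d * (d + (k+1)) ^ k) := by
            refine Nat.mul_le_mul (by omega) (Nat.mul_le_mul_left _ ?_)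
            exact Nat.pow_le_pow_left (by omega) k
        _ = Nat.factorial d * (d + (k+1)) ^ (k+1) := by ring

lemma key_fact_ineq (c d : ℕ) : Nat.factorial c * c ^ d ≤ Nat.factorial d * c ^ c := by
  rcases le_or_gt c d with h | h
  · have h1 : Nat.factorial c * (c+1) ^ (d - c) ≤ Nat.factorial d := by
      have := Nat.factorial_mul_pow_le_factorial (m := c) (n := d - c)
      rwa [Nat.add_sub_cancel' h] at this
    calc Nat.factorial c * c ^ d = Nat.factorial c * c ^ (d - c) * c ^ c := by
          rw [mul_assoc, ← pow_add]; congr 2; omega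
      _ ≤ Nat.factorial c * (c+1) ^ (d - c) * c ^ c := by
          exact Nat.mul_le_mul_right _ (Nat.mul_le_mul_left _
            (Nat.pow_le_pow_left (by omega) _))
      _ ≤ Nat.factorial d * c ^ c := Nat.mul_le_mul_right _ h1
  · have h1 : Nat.factorial c ≤ Nat.factorial d * c ^ (c - d) := by
      have := fact_le_fact_mul_pow d (c - d)
      rwa [Nat.add_sub_cancel' h.le] at this
    calc Nat.factorial c * c ^ d ≤ Nat.factorial d * c ^ (c - d) * c ^ d :=
          Nat.mul_le_mul_right _ h1
      _ = Nat.factorial d * c ^ c := by rw [mul_assoc, ← pow_add]; congr 2; omega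

lemma multinomial_max_nat {n : ℕ} {c d : α → ℕ}
    (hc : ∑ a, c a = n) (hd : ∑ a, d a = n) :
    Nat.multinomial univ d * ∏ a, (c a) ^ (d a) ≤
      Nat.multinomial univ c * ∏ a, (c a) ^ (c a) := by
  have hpt : ∏ a, (Nat.factorial (c a) * (c a) ^ (d a)) ≤
      ∏ a, (Nat.factorial (d a) * (c a) ^ (c a)) :=
    Finset.prod_le_prod' fun a _ => key_fact_ineq (c a) (d a)
  have hspec_c : (∏ a, Nat.factorial (c a)) * Nat.multinomial univ c = Nat.factorial n := by
    rw [Nat.multinomial_spec, hc]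
  have hspec_d : (∏ a, Nat.factorial (d a)) * Nat.multinomial univ d = Nat.factorial n := by
    rw [Nat.multinomial_spec, hd]
  have hM : 0 < (∏ a, Nat.factorial (c a)) * (∏ a, Nat.factorial (d a)) :=
    Nat.mul_pos (Finset.prod_pos fun a _ => Nat.factorial_pos _)
      (Finset.prod_pos fun a _ => Nat.factorial_pos _)
  refine Nat.le_of_mul_le_mul_left ?_ hM
  calc (∏ a, Nat.factorial (c a)) * (∏ a, Nat.factorial (d a)) *
        (Nat.multinomial univ d * ∏ a, (c a) ^ (d a))
      = (∏ a, Nat.factorial (c a)) * (∏ a, (c a) ^ (d a)) *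
          ((∏ a, Nat.factorial (d a)) * Nat.multinomial univ d) := by
        ring
    _ = (∏ a, (Nat.factorial (c a) * (c a) ^ (d a))) * Nat.factorial n := by
        rw [hspec_d, Finset.prod_mul_distrib]
    _ ≤ (∏ a, (Nat.factorial (d a) * (c a) ^ (c a))) * Nat.factorial n :=
        Nat.mul_le_mul_right _ hpt
    _ = (∏ a, Nat.factorial (d a)) * (∏ a, (c a) ^ (c a)) *
          ((∏ a, Nat.factorial (c a)) * Nat.multinomial univ c) := by
        rw [hspec_c, Finset.prod_mul_distrib]
    _ = (∏ a, Nat.factorial (c a)) * (∏ a, Nat.factorial (d a)) *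
          (Nat.multinomial univ c * ∏ a, (c a) ^ (c a)) := by
        ring

lemma prod_typeVec_pow {n : ℕ} (hn : 0 < n) (c d : α → ℕ) (hd : ∑ a, d a = n) :
    ∏ a, (typeVec n c a) ^ (d a) = (∏ a, ((c a : ℝ)) ^ (d a)) / (n : ℝ) ^ n := by
  have hn' : (0:ℝ) < (n:ℝ) := by exact_mod_cast hn
  simp only [typeVec, div_pow]
  rw [Finset.prod_div_distrib, Finset.prod_pow_eq_pow_sum, hd]

lemma multinomial_max_real {n : ℕ} (hn : 0 < n) {c d : α → ℕ}
    (hc : ∑ a, c a = n) (hd : ∑ a, d a = n) :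
    (Nat.multinomial univ d : ℝ) * ∏ a, (typeVec n c a) ^ (d a) ≤
      (Nat.multinomial univ c : ℝ) * ∏ a, (typeVec n c a) ^ (c a) := by
  rw [prod_typeVec_pow hn c d hd, prod_typeVec_pow hn c c hc]
  have hpow : (0:ℝ) < (n:ℝ) ^ n := by positivity
  rw [mul_div_assoc', mul_div_assoc', div_le_div_iff_of_pos_right hpow]
  exact_mod_cast multinomial_max_nat hc hd

lemma sum_type_classes {n : ℕ} (p : α → ℝ) (hp : ∑ a, p a = 1) :
    ∑ d ∈ piAntidiag (univ : Finset α) n,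
      (Nat.multinomial univ d : ℝ) * ∏ a, (p a) ^ (d a) = 1 := by
  have := Finset.sum_pow_eq_sum_piAntidiag (univ : Finset α) p n
  rw [hp, one_pow] at this
  exact this.symm

lemma card_piAntidiag_le (n : ℕ) :
    (piAntidiag (univ : Finset α) n).card ≤ (n + 1) ^ (Fintype.card α) := by
  classical
  have hsub : piAntidiag (univ : Finset α) n ⊆
      Fintype.piFinset (fun _ : α => Finset.range (n+1)) := by
    intro d hd
    rw [mem_piAntidiag] at hd
    rw [Fintype.mem_piFinset]
    intro a
    rw [Finset.mem_range, Nat.lt_succ_iff, ← hd.1]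
    exact Finset.single_le_sum (f := d) (fun i _ => Nat.zero_le _) (mem_univ a)
  calc (piAntidiag (univ : Finset α) n).card
      ≤ (Fintype.piFinset (fun _ : α => Finset.range (n+1))).card := Finset.card_le_card hsub
    _ = (n + 1) ^ (Fintype.card α) := by
        rw [Fintype.card_piFinset]
        simp

lemma typeVec_nonneg {n : ℕ} (c : α → ℕ) (a : α) : 0 ≤ typeVec n c a := by
  unfold typeVec; positivity

lemma typeVec_mem_stdSimplex {n : ℕ} (hn : 0 < n) {c : α → ℕ}
    (hc : ∑ a, c a = n) : typeVec n c ∈ stdSimplex ℝ α := by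
  constructor
  · intro a; unfold typeVec; positivity
  · unfold typeVec
    rw [← Finset.sum_div, div_eq_one_iff_eq (by exact_mod_cast hn.ne')]
    exact_mod_cast hc

lemma type_class_le_one {n : ℕ} (hn : 0 < n) {c : α → ℕ} (hc : ∑ a, c a = n) :
    (Nat.multinomial univ c : ℝ) * ∏ a, (typeVec n c a) ^ (c a) ≤ 1 := by
  have hp1 : ∑ a, typeVec n c a = 1 := (typeVec_mem_stdSimplex hn hc).2
  rw [← sum_type_classes (n := n) _ hp1]
  refine Finset.single_le_sum (f := fun d => (Nat.multinomial univ d : ℝ) *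
    ∏ a, (typeVec n c a) ^ (d a)) (fun d _ => ?_) ?_
  · exact mul_nonneg (Nat.cast_nonneg _)
      (Finset.prod_nonneg fun a _ => pow_nonneg (typeVec_nonneg c a) _)
  · rw [mem_piAntidiag]; exact ⟨hc, fun i _ => mem_univ i⟩

lemma one_le_card_mul_type_class {n : ℕ} (hn : 0 < n) {c : α → ℕ} (hc : ∑ a, c a = n) :
    (1:ℝ) ≤ ((n:ℝ) + 1) ^ (Fintype.card α) *
      ((Nat.multinomial univ c : ℝ) * ∏ a, (typeVec n c a) ^ (c a)) := by
  have hp1 : ∑ a, typeVec n c a = 1 := (typeVec_mem_stdSimplex hn hc).2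
  have h1 : (1:ℝ) = ∑ d ∈ piAntidiag (univ : Finset α) n,
      (Nat.multinomial univ d : ℝ) * ∏ a, (typeVec n c a) ^ (d a) :=
    (sum_type_classes _ hp1).symm
  refine le_trans (le_of_eq h1) ?_
  calc ∑ d ∈ piAntidiag (univ : Finset α) n,
        (Nat.multinomial univ d : ℝ) * ∏ a, (typeVec n c a) ^ (d a)
      ≤ (piAntidiag (univ : Finset α) n).card •
        ((Nat.multinomial univ c : ℝ) * ∏ a, (typeVec n c a) ^ (c a)) := by
        refine Finset.sum_le_card_nsmul _ _ _ fun d hd => ?_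
        rw [mem_piAntidiag] at hd
        exact multinomial_max_real hn hc hd.1
    _ ≤ ((n:ℝ) + 1) ^ (Fintype.card α) *
        ((Nat.multinomial univ c : ℝ) * ∏ a, (typeVec n c a) ^ (c a)) := by
        rw [nsmul_eq_mul]
        refine mul_le_mul_of_nonneg_right ?_ (mul_nonneg (Nat.cast_nonneg _)
          (Finset.prod_nonneg fun a _ => pow_nonneg (typeVec_nonneg c a) _))
        calc ((piAntidiag (univ : Finset α) n).card : ℝ)
            ≤ (((n + 1) ^ (Fintype.card α) : ℕ) : ℝ) := by
              exact_mod_cast card_piAntidiag_le n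
          _ = ((n:ℝ) + 1) ^ (Fintype.card α) := by push_cast; ring

/-! ### KL divergence -/

def klv (p q : α → ℝ) : ℝ := ∑ a, p a * Real.log (p a / q a)

lemma pointwise_exp {Qa pa : ℝ} (hQ : 0 < Qa)
    (c : ℕ) (hc : c = 0 ∨ 0 < pa) :
    Qa ^ c = pa ^ c * Real.exp (-((c : ℝ) * Real.log (pa / Qa))) := by
  rcases hc with hc | hp
  · subst hc; simp
  · have hratio : 0 < pa / Qa := div_pos hp hQ
    have h1 : Real.exp ((c : ℝ) * Real.log (pa / Qa)) = (pa / Qa) ^ c := by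
      rw [← Real.exp_log hratio, ← Real.exp_nat_mul, Real.exp_log hratio]
    rw [Real.exp_neg, h1, div_pow, ← div_eq_mul_inv, div_div_eq_mul_div, eq_div_iff]
    · ring
    · positivity

lemma n_mul_klv_typeVec {n : ℕ} (hn : 0 < n) (c : α → ℕ) (Q : α → ℝ) :
    (n : ℝ) * klv (typeVec n c) Q
      = ∑ a, (c a : ℝ) * Real.log (typeVec n c a / Q a) := by
  rw [klv, Finset.mul_sum]
  refine Finset.sum_congr rfl fun a _ => ?_
  have h : (n : ℝ) * typeVec n c a = (c a : ℝ) := by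
    rw [typeVec]
    field_simp
  rw [← mul_assoc, h]

lemma prod_Q_pow_eq {n : ℕ} (hn : 0 < n) (c : α → ℕ) {Q : α → ℝ} (hQ : ∀ a, 0 < Q a) :
    ∏ a, Q a ^ c a
      = (∏ a, typeVec n c a ^ c a) * Real.exp (-((n : ℝ) * klv (typeVec n c) Q)) := by
  rw [n_mul_klv_typeVec hn c Q, ← Finset.sum_neg_distrib, Real.exp_sum, ← Finset.prod_mul_distrib]
  refine Finset.prod_congr rfl fun a _ => ?_
  refine pointwise_exp (hQ a) (c a) ?_
  rcases Nat.eq_zero_or_pos (c a) with h | h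
  · exact Or.inl h
  · refine Or.inr ?_
    rw [typeVec]
    have h1 : (0:ℝ) < (c a : ℝ) := by exact_mod_cast h
    have h2 : (0:ℝ) < (n : ℝ) := by exact_mod_cast hn
    positivity

lemma class_upper {n : ℕ} (hn : 0 < n) {c : α → ℕ} (hc : ∑ a, c a = n)
    {Q : α → ℝ} (hQ : ∀ a, 0 < Q a) :
    (Nat.multinomial univ c : ℝ) * ∏ a, Q a ^ c a
      ≤ Real.exp (-((n : ℝ) * klv (typeVec n c) Q)) := by
  rw [prod_Q_pow_eq hn c hQ, ← mul_assoc]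
  calc (Nat.multinomial univ c : ℝ) * (∏ a, typeVec n c a ^ c a) *
        Real.exp (-((n : ℝ) * klv (typeVec n c) Q))
      ≤ 1 * Real.exp (-((n : ℝ) * klv (typeVec n c) Q)) :=
        mul_le_mul_of_nonneg_right (type_class_le_one hn hc) (Real.exp_nonneg _)
    _ = Real.exp (-((n : ℝ) * klv (typeVec n c) Q)) := one_mul _

lemma class_lower {n : ℕ} (hn : 0 < n) {c : α → ℕ} (hc : ∑ a, c a = n)
    {Q : α → ℝ} (hQ : ∀ a, 0 < Q a) :
    Real.exp (-((n : ℝ) * klv (typeVec n c) Q))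
      ≤ ((n:ℝ) + 1) ^ (Fintype.card α) *
        ((Nat.multinomial univ c : ℝ) * ∏ a, Q a ^ c a) := by
  have h1 := one_le_card_mul_type_class hn hc (α := α)
  calc Real.exp (-((n : ℝ) * klv (typeVec n c) Q))
      = 1 * Real.exp (-((n : ℝ) * klv (typeVec n c) Q)) := (one_mul _).symm
    _ ≤ (((n:ℝ) + 1) ^ (Fintype.card α) *
          ((Nat.multinomial univ c : ℝ) * ∏ a, (typeVec n c a) ^ (c a))) *
          Real.exp (-((n : ℝ) * klv (typeVec n c) Q)) :=
        mul_le_mul_of_nonneg_right h1 (Real.exp_nonneg _)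
    _ = ((n:ℝ) + 1) ^ (Fintype.card α) *
          ((Nat.multinomial univ c : ℝ) * ∏ a, Q a ^ c a) := by
        rw [prod_Q_pow_eq hn c hQ]; ring

lemma klv_term_ge {pa Qa : ℝ} (hp : 0 ≤ pa) (hQ : 0 < Qa) :
    pa - Qa ≤ pa * Real.log (pa / Qa) := by
  rcases eq_or_lt_of_le hp with h | h
  · simp [← h, hQ.le]
  · have h1 : Real.log (Qa / pa) ≤ Qa / pa - 1 :=
      Real.log_le_sub_one_of_pos (div_pos hQ h)
    have h2 : Real.log (pa / Qa) = -Real.log (Qa / pa) := by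
      rw [← Real.log_inv]
      congr 1
      field_simp
    have h3 : pa * Real.log (Qa / pa) ≤ pa * (Qa / pa - 1) :=
      mul_le_mul_of_nonneg_left h1 hp
    have h5 : pa * Real.log (pa / Qa) = -(pa * Real.log (Qa / pa)) := by rw [h2]; ring
    have h6 : pa * (Qa / pa - 1) = Qa - pa := by
      field_simp
    linarith [h3, h5, h6]

lemma klv_nonneg {p Q : α → ℝ} (hp : ∀ a, 0 ≤ p a) (hp1 : ∑ a, p a = 1)
    (hQ : ∀ a, 0 < Q a) (hQ1 : ∑ a, Q a = 1) : 0 ≤ klv p Q := by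
  have h : ∑ a, (p a - Q a) ≤ klv p Q :=
    Finset.sum_le_sum fun a _ => klv_term_ge (hp a) (hQ a)
  rw [Finset.sum_sub_distrib, hp1, hQ1] at h
  linarith

lemma klv_eq (Q : α → ℝ) (hQ : ∀ a, 0 < Q a) (p : α → ℝ) :
    klv p Q = ∑ a, (p a * Real.log (p a) - p a * Real.log (Q a)) := by
  refine Finset.sum_congr rfl fun a _ => ?_
  rcases eq_or_ne (p a) 0 with h | h
  · simp [h]
  · rw [Real.log_div h (hQ a).ne', mul_sub]

lemma klv_continuous (Q : α → ℝ) (hQ : ∀ a, 0 < Q a) :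
    Continuous fun p : α → ℝ => klv p Q := by
  have h : (fun p : α → ℝ => klv p Q)
      = fun p : α → ℝ => ∑ a, (p a * Real.log (p a) - p a * Real.log (Q a)) := by
    funext p; exact klv_eq Q hQ p
  rw [h]
  refine continuous_finset_sum _ fun a _ => ?_
  exact (Real.continuous_mul_log.comp (continuous_apply a)).sub
    ((continuous_apply a).mul continuous_const)

/-! ### Quantization -/

lemma exists_type_close {m : ℕ} {q : Fin (m+1) → ℝ} (hq0 : ∀ a, 0 ≤ q a)
    (hq1 : ∑ a, q a = 1) {n : ℕ} (hn : 0 < n) :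
    ∃ c ∈ piAntidiag (univ : Finset (Fin (m+1))) n,
      (∀ a, |typeVec n c a - q a| ≤ ((m:ℝ)+1) / n) ∧
      (∀ j : Fin m, |typeVec n c j.castSucc - q j.castSucc| ≤ 1 / n) := by
  have hn' : (0:ℝ) < (n:ℝ) := by exact_mod_cast hn
  set F : Fin m → ℕ := fun j => ⌊(n:ℝ) * q j.castSucc⌋₊ with hF
  set S : ℕ := ∑ j, F j with hS
  have hFle : ∀ j, (F j : ℝ) ≤ (n:ℝ) * q j.castSucc := fun j =>
    Nat.floor_le (mul_nonneg (by positivity) (hq0 _))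
  have hFgt : ∀ j, (n:ℝ) * q j.castSucc < (F j : ℝ) + 1 := fun j =>
    Nat.lt_floor_add_one _
  have hqcs_sum : ∑ j : Fin m, q j.castSucc ≤ 1 := by
    rw [Fin.sum_univ_castSucc] at hq1
    have := hq0 (Fin.last m)
    linarith
  have hSreal : (S : ℝ) = ∑ j : Fin m, (F j : ℝ) := by push_cast [hS]; rfl
  have hSlen : (S : ℝ) ≤ (n : ℝ) := by
    rw [hSreal]
    calc ∑ j : Fin m, (F j : ℝ) ≤ ∑ j : Fin m, (n:ℝ) * q j.castSucc :=
          Finset.sum_le_sum fun j _ => hFle j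
      _ = (n:ℝ) * ∑ j : Fin m, q j.castSucc := by rw [Finset.mul_sum]
      _ ≤ (n:ℝ) * 1 := by
          exact mul_le_mul_of_nonneg_left hqcs_sum hn'.le
      _ = (n:ℝ) := mul_one _
  have hSn : S ≤ n := by exact_mod_cast hSlen
  set c : Fin (m+1) → ℕ :=
    fun a => if h : a = Fin.last m then n - S else F (a.castPred h) with hc
  have hclast : c (Fin.last m) = n - S := by simp only [hc]; simp
  have hccs : ∀ j : Fin m, c j.castSucc = F j := by
    intro j
    have h1 : j.castSucc ≠ Fin.last m := (Fin.castSucc_lt_last j).ne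
    simp only [hc]
    rw [dif_neg h1, Fin.castPred_castSucc]
  have hcsum : ∑ a, c a = n := by
    rw [Fin.sum_univ_castSucc, hclast, Finset.sum_congr rfl (fun j _ => hccs j), ← hS]
    omega
  have hcastlast : ((n - S : ℕ) : ℝ) = (n:ℝ) - (S:ℝ) := Nat.cast_sub hSn
  have hcs_bound : ∀ j : Fin m, |typeVec n c j.castSucc - q j.castSucc| ≤ 1 / n := by
    intro j
    have hinv : (1/(n:ℝ)) * (n:ℝ) = 1 := by field_simp
    have hub : (F j : ℝ) / n ≤ q j.castSucc := by
      rw [div_le_iff₀ hn']; nlinarith [hFle j]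
    have hlb : q j.castSucc - 1 / n ≤ (F j : ℝ) / n := by
      rw [le_div_iff₀ hn']; nlinarith [hFgt j, hinv]
    have h0n : (0:ℝ) ≤ 1 / n := by positivity
    unfold typeVec
    rw [hccs j, abs_le]
    constructor
    · linarith
    · linarith
  refine ⟨c, by rw [mem_piAntidiag]; exact ⟨hcsum, fun i _ => mem_univ i⟩, ?_, hcs_bound⟩
  intro a
  rcases Fin.eq_castSucc_or_eq_last a with ⟨j, rfl⟩ | rfl
  · calc |typeVec n c j.castSucc - q j.castSucc| ≤ 1 / n := hcs_bound j
      _ ≤ ((m:ℝ)+1) / n := by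
          have hm : (1:ℝ) ≤ (m:ℝ) + 1 := by
            have : (0:ℝ) ≤ (m:ℝ) := Nat.cast_nonneg m
            linarith
          gcongr
  · have hql : q (Fin.last m) = 1 - ∑ j : Fin m, q j.castSucc := by
      rw [Fin.sum_univ_castSucc] at hq1; linarith
    have hexpr : typeVec n c (Fin.last m) - q (Fin.last m)
        = ∑ j : Fin m, (q j.castSucc - (F j : ℝ) / n) := by
      unfold typeVec
      rw [hclast, hcastlast, hql, Finset.sum_sub_distrib, ← Finset.sum_div, ← hSreal]
      field_simp
      ring
    rw [hexpr]
    have hterm_nonneg : ∀ j : Fin m, 0 ≤ q j.castSucc - (F j : ℝ) / n := by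
      intro j
      rw [sub_nonneg, div_le_iff₀ hn']
      nlinarith [hFle j]
    have hterm_le : ∀ j : Fin m, q j.castSucc - (F j : ℝ) / n ≤ 1 / n := by
      intro j
      rw [sub_le_iff_le_add, ← add_div, le_div_iff₀ hn']
      nlinarith [hFgt j]
    rw [abs_of_nonneg (Finset.sum_nonneg fun j _ => hterm_nonneg j)]
    calc ∑ j : Fin m, (q j.castSucc - (F j : ℝ) / n)
        ≤ ∑ j : Fin m, 1 / (n:ℝ) := Finset.sum_le_sum fun j _ => hterm_le j
      _ = (m : ℝ) / n := by
          rw [Finset.sum_const, Finset.card_univ, Fintype.card_fin, nsmul_eq_mul]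
          ring
      _ ≤ ((m:ℝ)+1) / n := by
          have hm : (m:ℝ) ≤ (m:ℝ) + 1 := by linarith
          gcongr

/-! ### log asymptotics -/

lemma tendsto_mul_log_div (Mc : ℝ) :
    Tendsto (fun x : ℝ => Mc * (Real.log (x+1) / x)) atTop (nhds 0) := by
  have h1 : Tendsto (fun x : ℝ => Real.log x / x) atTop (nhds 0) :=
    Real.isLittleO_log_id_atTop.tendsto_div_nhds_zero
  have h2 : Tendsto (fun x : ℝ => x + 1) atTop atTop :=
    tendsto_atTop_add_const_right _ 1 tendsto_id
  have h3 : Tendsto (fun x : ℝ => Real.log (x+1) / (x+1)) atTop (nhds 0) := h1.comp h2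
  have h4 : Tendsto (fun x : ℝ => (x+1) / x) atTop (nhds 1) := by
    have h5 : Tendsto (fun x : ℝ => 1 + x⁻¹) atTop (nhds 1) := by
      have := tendsto_const_nhds (α := ℝ) (x := (1:ℝ)) (f := atTop)
      have h6 := this.add tendsto_inv_atTop_zero
      simpa using h6
    refine h5.congr' ?_
    filter_upwards [eventually_gt_atTop (0:ℝ)] with x hx
    field_simp
  have h7 : Tendsto (fun x : ℝ => (Real.log (x+1) / (x+1)) * ((x+1)/x)) atTop (nhds 0) := by
    have := h3.mul h4
    simpa using this
  have h8 : Tendsto (fun x : ℝ => Real.log (x+1) / x) atTop (nhds 0) := by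
    refine h7.congr' ?_
    filter_upwards [eventually_gt_atTop (0:ℝ)] with x hx
    have hx1 : x + 1 ≠ 0 := by linarith
    field_simp
  have := h8.const_mul Mc
  simpa using this


open MeasureTheory ProbabilityTheory

section Meas

variable {M : ℕ} {Ω : Type*} [MeasurableSpace Ω] (P : MeasureTheory.Measure Ω)
  [MeasureTheory.IsProbabilityMeasure P]
  (Z : ℕ → Ω → Fin (M + 1))
  (Q : Fin (M + 1) → ℝ)

lemma prob_seq (hindep : iIndepFun Z P)
    (hdist : ∀ (i : ℕ) (a : Fin (M + 1)), P {ω | Z i ω = a} = ENNReal.ofReal (Q a))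
    (n : ℕ) (x : Fin n → Fin (M + 1)) :
    P {ω | ∀ j : Fin n, Z j ω = x j} = ∏ j : Fin n, ENNReal.ofReal (Q (x j)) := by
  classical
  set sets : ℕ → Set (Fin (M + 1)) :=
    fun i => if h : i < n then {x ⟨i, h⟩} else Set.univ with hsets_def
  have hsets : ∀ i ∈ Finset.range n, MeasurableSet (sets i) := by
    intro i _
    by_cases h : i < n <;> simp [hsets_def, h]
  have he : {ω | ∀ j : Fin n, Z j ω = x j} = ⋂ i ∈ Finset.range n, Z i ⁻¹' sets i := by
    ext ω
    simp only [Set.mem_setOf_eq, Set.mem_iInter, Set.mem_preimage, Finset.mem_range]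
    constructor
    · intro h i hi
      simp only [hsets_def, dif_pos hi]
      exact h ⟨i, hi⟩
    · intro h j
      have := h j j.isLt
      simpa [hsets_def, j.isLt] using this
  rw [he, hindep.measure_inter_preimage_eq_mul (Finset.range n) hsets]
  have h2 : ∀ i ∈ Finset.range n,
      P (Z i ⁻¹' sets i)
        = (fun i => if h : i < n then ENNReal.ofReal (Q (x ⟨i, h⟩)) else 1) i := by
    intro i hi
    rw [Finset.mem_range] at hi
    simp only [hsets_def, dif_pos hi]
    exact hdist i (x ⟨i, hi⟩)
  rw [Finset.prod_congr rfl h2,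
    ← Fin.prod_univ_eq_prod_range
      (fun i => if h : i < n then ENNReal.ofReal (Q (x ⟨i, h⟩)) else 1) n]
  exact Finset.prod_congr rfl fun j _ => by simp [j.isLt]

lemma prob_event_eq (hmeas : ∀ i, Measurable (Z i))
    (hindep : iIndepFun Z P)
    (hdist : ∀ (i : ℕ) (a : Fin (M + 1)), P {ω | Z i ω = a} = ENNReal.ofReal (Q a))
    (hQnn : ∀ a, 0 ≤ Q a) (n : ℕ) (S : Set (Fin (M + 1) → ℝ))
    [DecidablePred fun c : Fin (M + 1) → ℕ => typeVec n c ∈ S] :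
    (P {ω | empiricalType Z n ω ∈ S}).toReal
      = ∑ x ∈ Finset.univ.filter (fun x : Fin n → Fin (M + 1) => typeVec n (cntv x) ∈ S),
          ∏ j : Fin n, Q (x j) := by
  classical
  have hev : {ω | empiricalType Z n ω ∈ S}
      = ⋃ x ∈ Finset.univ.filter (fun x : Fin n → Fin (M + 1) => typeVec n (cntv x) ∈ S),
          {ω | ∀ j : Fin n, Z j ω = x j} := by
    ext ω
    simp only [Set.mem_setOf_eq, Set.mem_iUnion, Finset.mem_filter, Finset.mem_univ, true_and]
    constructor
    · intro h
      refine ⟨fun j => Z j ω, ?_, fun j => rfl⟩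
      have h1 : empiricalType Z n ω = typeVec n (cntv (fun j : Fin n => Z j ω)) := rfl
      rwa [← h1]
    · rintro ⟨x, hx, hxe⟩
      have hxx : (fun j : Fin n => Z j ω) = x := funext hxe
      have h1 : empiricalType Z n ω = typeVec n (cntv (fun j : Fin n => Z j ω)) := rfl
      rw [h1, hxx]
      exact hx
  have hdisj : (↑(Finset.univ.filter
        (fun x : Fin n → Fin (M + 1) => typeVec n (cntv x) ∈ S)) :
      Set (Fin n → Fin (M + 1))).PairwiseDisjoint
      (fun x => {ω | ∀ j : Fin n, Z j ω = x j}) := by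
    intro x _ y _ hxy
    rw [Function.onFun, Set.disjoint_left]
    intro ω hx hy
    exact hxy (funext fun j => (hx j).symm.trans (hy j))
  have hmeas' : ∀ x ∈ Finset.univ.filter
      (fun x : Fin n → Fin (M + 1) => typeVec n (cntv x) ∈ S),
      MeasurableSet {ω | ∀ j : Fin n, Z j ω = x j} := by
    intro x _
    have h1 : {ω | ∀ j : Fin n, Z j ω = x j} = ⋂ j : Fin n, (Z j) ⁻¹' {x j} := by
      ext ω; simp [Set.mem_iInter]
    rw [h1]
    exact MeasurableSet.iInter fun j => (hmeas j) (measurableSet_singleton _)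
  rw [hev, MeasureTheory.measure_biUnion_finset hdisj hmeas']
  rw [ENNReal.toReal_sum (fun x _ => ?_)]
  · refine Finset.sum_congr rfl fun x _ => ?_
    rw [prob_seq P Z Q hindep hdist n x, ENNReal.toReal_prod]
    exact Finset.prod_congr rfl fun j _ => ENNReal.toReal_ofReal (hQnn (x j))
  · rw [prob_seq P Z Q hindep hdist n x]
    exact ENNReal.prod_ne_top fun j _ => ENNReal.ofReal_ne_top

end Meas

end SanovAux



/-- for i.i.d. samples with full-support distribution `Q ∉ Π`,
`Π` nonempty and regular, and any fixed `ℓ ∈ ℕ`,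
`lim_{n→∞} (1/(n−ℓ)) ln P(T_{n−ℓ} ∈ Π_{n,ℓ}) = −D_KL(Π‖Q)`. -/
theorem sanov_error_exponent_shifted
    {K m : ℕ} (A : Matrix (Fin K) (Fin m) ℝ) (ℓ : ℕ)
    (Q : Fin (m + 1) → ℝ) (hQ : Q ∈ stdSimplex ℝ (Fin (m + 1)))
    (hQpos : ∀ i, 0 < Q i)
    (hne : (PiSet A).Nonempty) (hQnot : Q ∉ PiSet A)
    (hreg : RegularPi A)
    {Ω : Type*} [MeasurableSpace Ω] (P : MeasureTheory.Measure Ω)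
    [MeasureTheory.IsProbabilityMeasure P]
    (Z : ℕ → Ω → Fin (m + 1))
    (hmeas : ∀ i, Measurable (Z i))
    (hindep : iIndepFun Z P)
    (hdist : ∀ (i : ℕ) (a : Fin (m + 1)), P {ω | Z i ω = a} = ENNReal.ofReal (Q a)) :
    Tendsto
      (fun n : ℕ => (1 / ((n : ℝ) - (ℓ : ℝ))) *
        Real.log ((P {ω | empiricalType Z (n - ℓ) ω ∈ PiSetShift A n ℓ}).toReal))
      atTop
      (nhds (-(sInf ((fun p => klDiv p Q) '' PiSet A)))) := by
  classical
  obtain ⟨hQnn, hQ1⟩ := hQ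
  set D : ℝ := sInf ((fun p => klDiv p Q) '' PiSet A) with hDdef
  have hkl : ∀ p : Fin (m+1) → ℝ, klDiv p Q = SanovAux.klv p Q := fun _ => rfl
  have himg : ((fun p => klDiv p Q) '' PiSet A).Nonempty := hne.image _
  have hbdd : BddBelow ((fun p => klDiv p Q) '' PiSet A) := by
    refine ⟨0, ?_⟩
    rintro y ⟨p, hp, rfl⟩
    exact SanovAux.klv_nonneg hp.1.1 hp.1.2 hQpos hQ1
  have hDle : ∀ p ∈ PiSet A, D ≤ klDiv p Q := fun p hp => csInf_le hbdd ⟨p, hp, rfl⟩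
  have hAt : Tendsto (fun n : ℕ => ((n - ℓ : ℕ) : ℝ)) atTop atTop :=
    tendsto_natCast_atTop_atTop.comp (tendsto_sub_atTop_nat ℓ)
  have hlog0 : Tendsto
      (fun n : ℕ => ((m:ℝ)+1) * (Real.log (((n - ℓ : ℕ):ℝ) + 1) / ((n - ℓ : ℕ):ℝ)))
      atTop (nhds 0) := (SanovAux.tendsto_mul_log_div ((m:ℝ)+1)).comp hAt
  rw [Metric.tendsto_nhds]
  intro ε hε
  obtain ⟨y, ⟨p0, hp0, rfl⟩, hy⟩ := exists_lt_of_csInf_lt himg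
    (show D < D + ε/8 by linarith)
  have hopen : IsOpen {r : Fin (m+1) → ℝ | SanovAux.klv r Q < D + ε/4} :=
    isOpen_lt (SanovAux.klv_continuous Q hQpos) continuous_const
  have hp0U : p0 ∈ {r : Fin (m+1) → ℝ | SanovAux.klv r Q < D + ε/4} := by
    have hy' : SanovAux.klv p0 Q < D + ε/8 := hy
    simp only [Set.mem_setOf_eq]
    linarith
  obtain ⟨p', hp'U, hp'G⟩ := mem_closure_iff_nhds.1 (hreg p0 hp0) _ (hopen.mem_nhds hp0U)
  obtain ⟨hp'sim, i0, hi0⟩ := hp'G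
  set γ : ℝ := ∑ j, A i0 j * p' j.castSucc with hγdef
  set SA : ℝ := ∑ j, |A i0 j| with hSAdef
  have hSA0 : 0 ≤ SA := Finset.sum_nonneg fun j _ => abs_nonneg _
  obtain ⟨r0, hr0pos, hball⟩ := Metric.isOpen_iff.1 hopen p' hp'U
  have ev1 : ∀ᶠ n : ℕ in atTop, ℓ + 1 ≤ n := eventually_ge_atTop (ℓ+1)
  have ev2 : ∀ᶠ n : ℕ in atTop, ((m:ℝ)+1) / ((n - ℓ:ℕ):ℝ) < r0 := by
    have h1 : ∀ᶠ n : ℕ in atTop,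
        ((m:ℝ)+1)/r0 < ((n-ℓ:ℕ):ℝ) ∧ (0:ℝ) < ((n-ℓ:ℕ):ℝ) :=
      (hAt.eventually (eventually_gt_atTop _)).and (hAt.eventually (eventually_gt_atTop 0))
    refine h1.mono fun n hn => ?_
    obtain ⟨h2, h3⟩ := hn
    rw [div_lt_iff₀ h3]
    rw [div_lt_iff₀ hr0pos] at h2
    linarith
  have ev3 : ∀ᶠ n : ℕ in atTop, (SA + (ℓ:ℝ)) / γ ≤ ((n-ℓ:ℕ):ℝ) :=
    hAt.eventually (eventually_ge_atTop _)
  have ev4 : ∀ᶠ n : ℕ in atTop,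
      ((m:ℝ)+1) * (Real.log (((n-ℓ:ℕ):ℝ)+1)/((n-ℓ:ℕ):ℝ)) < ε/8 :=
    hlog0.eventually_lt_const (by linarith)
  have ev5 : ∀ᶠ n : ℕ in atTop, (0:ℝ) < ((n-ℓ:ℕ):ℝ) :=
    hAt.eventually (eventually_gt_atTop 0)
  filter_upwards [ev1, ev2, ev3, ev4, ev5] with n hn1 hn2 hn3 hn4 hn5
  set n' : ℕ := n - ℓ with hn'def
  have hℓn : ℓ ≤ n := by omega
  have hn'pos : 0 < n' := by omega
  have hncast : (n:ℝ) - (ℓ:ℝ) = (n' : ℝ) := by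
    rw [hn'def, Nat.cast_sub hℓn]
  have hn'r : (0:ℝ) < (n':ℝ) := hn5
  obtain ⟨c, hcmem, hclose, hclosecs⟩ :=
    SanovAux.exists_type_close hp'sim.1 hp'sim.2 hn'pos
  have hcsum : ∑ a, c a = n' := ((Finset.mem_piAntidiag).1 hcmem).1
  have htsim : SanovAux.typeVec n' c ∈ stdSimplex ℝ (Fin (m+1)) :=
    SanovAux.typeVec_mem_stdSimplex hn'pos hcsum
  have hγpos : 0 < γ := hi0
  have hconstr : (ℓ:ℝ)/((n:ℝ)-(ℓ:ℝ)) ≤ ∑ j, A i0 j * SanovAux.typeVec n' c j.castSucc := by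
    have hdiffsum : |∑ j, A i0 j * SanovAux.typeVec n' c j.castSucc - γ| ≤ SA / n' := by
      rw [hγdef, ← Finset.sum_sub_distrib]
      calc |∑ j, (A i0 j * SanovAux.typeVec n' c j.castSucc - A i0 j * p' j.castSucc)|
          ≤ ∑ j, |A i0 j * SanovAux.typeVec n' c j.castSucc - A i0 j * p' j.castSucc| :=
            Finset.abs_sum_le_sum_abs _ _
        _ = ∑ j, |A i0 j| * |SanovAux.typeVec n' c j.castSucc - p' j.castSucc| := by
            refine Finset.sum_congr rfl fun j _ => ?_
            rw [← mul_sub, abs_mul]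
        _ ≤ ∑ j, |A i0 j| * (1/(n':ℝ)) := Finset.sum_le_sum fun j _ =>
            mul_le_mul_of_nonneg_left (hclosecs j) (abs_nonneg _)
        _ = (∑ j, |A i0 j|) * (1/(n':ℝ)) := (Finset.sum_mul _ _ _).symm
        _ = SA / n' := by rw [← hSAdef]; ring
    have h6 := abs_le.1 hdiffsum
    have h8 : SA + (ℓ:ℝ) ≤ (n':ℝ) * γ := by
      rw [div_le_iff₀ hγpos] at hn3
      linarith
    have h9 : (ℓ:ℝ)/(n':ℝ) + SA/(n':ℝ) ≤ γ := by
      rw [← add_div, div_le_iff₀ hn'r]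
      linarith
    rw [hncast]
    linarith [h6.1]
  have htShift : SanovAux.typeVec n' c ∈ PiSetShift A n ℓ := ⟨htsim, i0, hconstr⟩
  have htU : SanovAux.klv (SanovAux.typeVec n' c) Q < D + ε/4 := by
    have hdist' : dist (SanovAux.typeVec n' c) p' < r0 := by
      rw [dist_pi_lt_iff hr0pos]
      intro a
      rw [Real.dist_eq]
      exact lt_of_le_of_lt (hclose a) hn2
    exact hball hdist'
  have hPn : (P {ω | empiricalType Z n' ω ∈ PiSetShift A n ℓ}).toReal
      = ∑ c' ∈ (Finset.piAntidiag (Finset.univ : Finset (Fin (m+1))) n').filter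
          (fun c' => SanovAux.typeVec n' c' ∈ PiSetShift A n ℓ),
          (Nat.multinomial Finset.univ c' : ℝ) * ∏ a, Q a ^ c' a := by
    rw [SanovAux.prob_event_eq P Z Q hmeas hindep hdist hQnn n' (PiSetShift A n ℓ),
      SanovAux.sum_filter_type Q (fun c' => SanovAux.typeVec n' c' ∈ PiSetShift A n ℓ)]
  set Pn : ℝ := (P {ω | empiricalType Z n' ω ∈ PiSetShift A n ℓ}).toReal with hPndef
  have hcard : Fintype.card (Fin (m+1)) = m + 1 := Fintype.card_fin _
  set E : ℝ := Real.exp (-((n':ℝ) * (D + ε/4))) with hEdef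
  set B : ℝ := ((n':ℝ) + 1) ^ (m+1) with hBdef
  have hBpos : 0 < B := by rw [hBdef]; positivity
  have hlow : E / B ≤ Pn := by
    rw [hPn]
    have hterm : E / B ≤ (Nat.multinomial Finset.univ c : ℝ) * ∏ a, Q a ^ c a := by
      rw [div_le_iff₀ hBpos]
      calc E ≤ Real.exp (-((n':ℝ) * SanovAux.klv (SanovAux.typeVec n' c) Q)) := by
            rw [hEdef, Real.exp_le_exp]
            have h10 : (n':ℝ) * SanovAux.klv (SanovAux.typeVec n' c) Q
                ≤ (n':ℝ) * (D + ε/4) :=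
              mul_le_mul_of_nonneg_left htU.le hn'r.le
            linarith
        _ ≤ ((n':ℝ) + 1) ^ (Fintype.card (Fin (m+1))) *
            ((Nat.multinomial Finset.univ c : ℝ) * ∏ a, Q a ^ c a) :=
            SanovAux.class_lower hn'pos hcsum hQpos
        _ = (Nat.multinomial Finset.univ c : ℝ) * (∏ a, Q a ^ c a) * B := by
            rw [hcard, hBdef]; ring
    refine le_trans hterm (Finset.single_le_sum
      (f := fun c' => (Nat.multinomial Finset.univ c' : ℝ) * ∏ a, Q a ^ c' a)
      (fun c' _ => ?_) ?_)
    · exact mul_nonneg (Nat.cast_nonneg _) (Finset.prod_nonneg fun a _ =>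
        pow_nonneg (hQnn a) _)
    · exact Finset.mem_filter.2 ⟨hcmem, htShift⟩
  have hEBpos : 0 < E / B := div_pos (Real.exp_pos _) hBpos
  have hPpos : 0 < Pn := lt_of_lt_of_le hEBpos hlow
  have hup : Pn ≤ B * Real.exp (-((n':ℝ) * D)) := by
    rw [hPn]
    calc ∑ c' ∈ (Finset.piAntidiag (Finset.univ : Finset (Fin (m+1))) n').filter
          (fun c' => SanovAux.typeVec n' c' ∈ PiSetShift A n ℓ),
          (Nat.multinomial Finset.univ c' : ℝ) * ∏ a, Q a ^ c' a
        ≤ ((Finset.piAntidiag (Finset.univ : Finset (Fin (m+1))) n').filter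
            (fun c' => SanovAux.typeVec n' c' ∈ PiSetShift A n ℓ)).card •
            Real.exp (-((n':ℝ) * D)) := by
          refine Finset.sum_le_card_nsmul _ _ _ fun c' hc' => ?_
          rw [Finset.mem_filter] at hc'
          obtain ⟨hc'mem, hc'S⟩ := hc'
          have hc'sum : ∑ a, c' a = n' := ((Finset.mem_piAntidiag).1 hc'mem).1
          have hc'Pi : SanovAux.typeVec n' c' ∈ PiSet A := by
            obtain ⟨hsim, i1, hi1⟩ := hc'S
            refine ⟨hsim, i1, le_trans ?_ hi1⟩
            rw [hncast]
            positivity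
          have hD' : D ≤ SanovAux.klv (SanovAux.typeVec n' c') Q := hDle _ hc'Pi
          calc (Nat.multinomial Finset.univ c' : ℝ) * ∏ a, Q a ^ c' a
              ≤ Real.exp (-((n':ℝ) * SanovAux.klv (SanovAux.typeVec n' c') Q)) :=
                SanovAux.class_upper hn'pos hc'sum hQpos
            _ ≤ Real.exp (-((n':ℝ) * D)) := by
                rw [Real.exp_le_exp]
                have h12 := mul_le_mul_of_nonneg_left hD' hn'r.le
                linarith
      _ ≤ B * Real.exp (-((n':ℝ) * D)) := by
          rw [nsmul_eq_mul]
          refine mul_le_mul_of_nonneg_right ?_ (Real.exp_nonneg _)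
          calc (((Finset.piAntidiag (Finset.univ : Finset (Fin (m+1))) n').filter
                (fun c' => SanovAux.typeVec n' c' ∈ PiSetShift A n ℓ)).card : ℝ)
              ≤ ((Finset.piAntidiag (Finset.univ : Finset (Fin (m+1))) n').card : ℝ) := by
                exact_mod_cast Finset.card_le_card (Finset.filter_subset _ _)
            _ ≤ (((n'+1)^(m+1) : ℕ) : ℝ) := by
                have h13 := SanovAux.card_piAntidiag_le (α := Fin (m+1)) n'
                rw [hcard] at h13
                exact_mod_cast h13
            _ = B := by rw [hBdef]; push_cast; ring
  have hlogPn_low : -((n':ℝ) * (D + ε/4)) - ((m:ℝ)+1) * Real.log ((n':ℝ)+1)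
      ≤ Real.log Pn := by
    have h := Real.log_le_log hEBpos hlow
    rw [hEdef, hBdef, Real.log_div (Real.exp_ne_zero _) (by positivity), Real.log_exp,
      Real.log_pow] at h
    push_cast at h
    linarith
  have hlogPn_up : Real.log Pn ≤ ((m:ℝ)+1) * Real.log ((n':ℝ)+1) - (n':ℝ) * D := by
    have h := Real.log_le_log hPpos hup
    rw [hBdef, Real.log_mul (by positivity) (Real.exp_ne_zero _), Real.log_exp,
      Real.log_pow] at h
    push_cast at h
    linarith
  rw [Real.dist_eq, hncast, abs_lt]
  have hloginv : (0:ℝ) < 1/(n':ℝ) := by positivity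
  have hlogterm_nonneg : 0 ≤ Real.log ((n':ℝ)+1) := Real.log_nonneg (by linarith)
  have hL0 : 0 ≤ Real.log ((n':ℝ)+1) / (n':ℝ) := div_nonneg hlogterm_nonneg hn'r.le
  have hL4 : ((m:ℝ)+1) * (Real.log ((n':ℝ)+1) / (n':ℝ)) < ε/8 := hn4
  have h1 : (1/(n':ℝ)) * (-((n':ℝ) * (D + ε/4)) - ((m:ℝ)+1) * Real.log ((n':ℝ)+1))
      ≤ (1/(n':ℝ)) * Real.log Pn :=
    mul_le_mul_of_nonneg_left hlogPn_low hloginv.le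
  have h2 : (1/(n':ℝ)) * (-((n':ℝ) * (D + ε/4)) - ((m:ℝ)+1) * Real.log ((n':ℝ)+1))
      = -(D + ε/4) - ((m:ℝ)+1) * (Real.log ((n':ℝ)+1) / (n':ℝ)) := by
    field_simp
  have h3 : (1/(n':ℝ)) * Real.log Pn
      ≤ (1/(n':ℝ)) * (((m:ℝ)+1) * Real.log ((n':ℝ)+1) - (n':ℝ) * D) :=
    mul_le_mul_of_nonneg_left hlogPn_up hloginv.le
  have h4 : (1/(n':ℝ)) * (((m:ℝ)+1) * Real.log ((n':ℝ)+1) - (n':ℝ) * D)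
      = ((m:ℝ)+1) * (Real.log ((n':ℝ)+1) / (n':ℝ)) - D := by
    field_simp
  constructor
  · have hml : ((m:ℝ)+1) * (Real.log ((n':ℝ)+1) / (n':ℝ)) ≥ 0 :=
      mul_nonneg (by positivity) hL0
    rw [h2] at h1
    linarith
  · rw [h4] at h3
    linarith

end
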